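/- Let σ_1, …, σ_n ≥ 1 and τ_1, …, τ_p ≥ 1 be real numbers; set q = σ_1 + ⋯ + σ_n and Q = q + τ_1 + ⋯ + τ_p. With the dilations δ_λ on ℝⁿ, E_λ on ℝ^p and F_λ(x,y,η) = (δ_λ(x), δ_λ(y), E_λ(η)) on ℝⁿ × ℝⁿ × ℝ^p, let Ω = {(x, y, η) : (x, 0) ≠ (y, η)}, let α < q − Q, and let g : Ω → ℝ be continuously differentiable with g(F_λ(w)) = λ^α g(w) for every w ∈ Ω and λ > 0. Define h(x, y) := ∫_{ℝ^p} g(x, y, η) dη for x ≠ y in ℝⁿ. Then for every x ≠ y and every coordinate index i of the (x,y)-variables in ℝⁿ × ℝⁿ, the function η ↦ (∂g/∂w_i)(x, y, η) is integrable on ℝ^p, the partial derivative ∂h/∂w_i exists at (x, y), and ∂h/∂w_i(x, y) = ∫_{ℝ^p} (∂g/∂w_i)(x, y, η) dη. -/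

import Mathlib

open MeasureTheory Set Metric


private lemma integrable_1d {c : ℝ} (hc : c < -1) :
    Integrable (fun t : ℝ => max 1 |t| ^ c) := by
  have h : Integrable (fun t : ℝ => (1 + ‖t‖) ^ (-(-c))) (volume : Measure ℝ) :=
    integrable_one_add_norm (by simp; linarith)
  refine (h.const_mul ((2:ℝ) ^ (-c))).mono' ?_ ?_
  · apply Continuous.aestronglyMeasurable
    apply Continuous.rpow_const
    · exact continuous_const.max (continuous_abs)
    · intro t; left; positivity
  · filter_upwards with t
    have h1 : (0:ℝ) < max 1 |t| := lt_of_lt_of_le one_pos (le_max_left _ _)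
    have h2 : (1 + |t|) / 2 ≤ max 1 |t| := by
      rcases le_total (|t|) 1 with h | h
      · calc (1+|t|)/2 ≤ (1+1)/2 := by linarith
          _ = 1 := by norm_num
          _ ≤ _ := le_max_left _ _
      · calc (1+|t|)/2 ≤ (|t|+|t|)/2 := by linarith
          _ = |t| := by ring
          _ ≤ _ := le_max_right _ _
    have h3 : max 1 |t| ^ c ≤ ((1 + |t|) / 2) ^ c :=
      Real.rpow_le_rpow_of_nonpos (by positivity) h2 (by linarith)
    rw [Real.norm_eq_abs, abs_of_nonneg (Real.rpow_nonneg h1.le c)]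
    refine h3.trans ?_
    rw [Real.div_rpow (by positivity) (by norm_num), neg_neg, Real.norm_eq_abs,
      Real.rpow_neg (by norm_num)]
    rw [div_eq_mul_inv, mul_comm]


private lemma integrable_B {p : ℕ} (c : ℝ) (hc : 0 < p → c < -1) :
    Integrable (fun η : Fin p → ℝ => ∏ j, max 1 |η j| ^ c) := by
  rcases Nat.eq_zero_or_pos p with hp | hp
  · subst hp
    simp only [Finset.univ_eq_empty, Finset.prod_empty]
    rw [integrable_const_iff]
    right
    rw [volume_pi]
    rw [Measure.pi_of_empty]
    infer_instance
  · exact Integrable.fintype_prod (f := fun (_ : Fin p) (t : ℝ) => max 1 |t| ^ c)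
      fun _ => integrable_1d (hc hp)

private noncomputable def dilL (m : ℕ) (c : Fin m → ℝ) (l : ℝ) :
    (Fin m → ℝ) →L[ℝ] (Fin m → ℝ) :=
  ContinuousLinearMap.pi fun j => (l ^ c j) • ContinuousLinearMap.proj j

private noncomputable def Fl (n p : ℕ) (σ : Fin n → ℝ) (τ : Fin p → ℝ) (l : ℝ) :
    ((Fin n → ℝ) × (Fin n → ℝ) × (Fin p → ℝ)) →L[ℝ]
      ((Fin n → ℝ) × (Fin n → ℝ) × (Fin p → ℝ)) :=
  (dilL n σ l).prodMap ((dilL n σ l).prodMap (dilL p τ l))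

private lemma Fl_apply (n p : ℕ) (σ : Fin n → ℝ) (τ : Fin p → ℝ) (l : ℝ)
    (w : (Fin n → ℝ) × (Fin n → ℝ) × (Fin p → ℝ)) :
    Fl n p σ τ l w =
      (fun i => l ^ σ i * w.1 i, fun i => l ^ σ i * w.2.1 i, fun j => l ^ τ j * w.2.2 j) := by
  refine Prod.ext ?_ (Prod.ext ?_ ?_) <;> funext k <;>
    simp [Fl, dilL, ContinuousLinearMap.proj]


private def Om (n p : ℕ) : Set ((Fin n → ℝ) × (Fin n → ℝ) × (Fin p → ℝ)) :=
  {w | ((w.1, (0 : Fin p → ℝ)) : (Fin n → ℝ) × (Fin p → ℝ)) ≠ (w.2.1, w.2.2)}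

private lemma isOpen_Om (n p : ℕ) : IsOpen (Om n p) := by
  have : Om n p = (fun w : (Fin n → ℝ) × (Fin n → ℝ) × (Fin p → ℝ) =>
      (((w.1, (0 : Fin p → ℝ)) : (Fin n → ℝ) × (Fin p → ℝ)), (w.2.1, w.2.2))) ⁻¹'
      (Set.diagonal ((Fin n → ℝ) × (Fin p → ℝ)))ᶜ := by
    ext w; simp [Om, Set.mem_diagonal_iff]
  rw [this]
  exact (isClosed_diagonal.isOpen_compl).preimage (by fun_prop)

private lemma key_bound {n p : ℕ} (σ : Fin n → ℝ) (τ : Fin p → ℝ)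
    (hσ : ∀ i, 0 ≤ σ i) (hτ : ∀ j, 1 ≤ τ j) (β : ℝ) (hβ : β ≤ 0)
    (φ : (Fin n → ℝ) × (Fin n → ℝ) × (Fin p → ℝ) → ℝ)
    (hφ : ContinuousOn φ (Om n p))
    (hhomφ : ∀ w ∈ Om n p, ∀ l : ℝ, 0 < l →
      φ (fun i => l ^ σ i * w.1 i, fun i => l ^ σ i * w.2.1 i, fun j => l ^ τ j * w.2.2 j)
        = l ^ β * φ w)
    (K : Set ((Fin n → ℝ) × (Fin n → ℝ))) (hK : IsCompact K)
    (hKd : ∀ z ∈ K, z.1 ≠ z.2) :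
    ∃ C : ℝ, 0 ≤ C ∧ ∀ z ∈ K, ∀ η : Fin p → ℝ,
      |φ (z.1, z.2, η)| ≤ C * ∏ j, max 1 |η j| ^ (β / ∑ j', τ j') := by
  obtain ⟨M, hM⟩ := hK.isBounded.subset_closedBall 0
  have hτ0 : ∀ j, (0:ℝ) < τ j := fun j => lt_of_lt_of_le one_pos (hτ j)
  set K₂ : Set ((Fin n → ℝ) × (Fin n → ℝ) × (Fin p → ℝ)) :=
    (fun q : ((Fin n → ℝ) × (Fin n → ℝ)) × (Fin p → ℝ) => (q.1.1, q.1.2, q.2)) ''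
      (K ×ˢ closedBall 0 1) with hK₂def
  have hK₂c : IsCompact K₂ := (hK.prod (isCompact_closedBall 0 1)).image (by fun_prop)
  have hK₂Ω : K₂ ⊆ Om n p := by
    rintro _ ⟨⟨z, η⟩, ⟨hz, -⟩, rfl⟩
    simp only [Om, Set.mem_setOf_eq, ne_eq, Prod.mk.injEq, not_and]
    intro h
    exact absurd h (hKd z hz)
  set K₁ : Set ((Fin n → ℝ) × (Fin n → ℝ) × (Fin p → ℝ)) :=
    closedBall (0 : Fin n → ℝ) M ×ˢ
      ((closedBall (0 : Fin n → ℝ) M) ×ˢ sphere (0 : Fin p → ℝ) 1) with hK₁def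
  have hK₁c : IsCompact K₁ :=
    (isCompact_closedBall _ _).prod ((isCompact_closedBall _ _).prod (isCompact_sphere _ _))
  have hK₁Ω : K₁ ⊆ Om n p := by
    rintro ⟨a, b, c⟩ ⟨-, -, hc⟩
    have hc0 : c ≠ 0 := by
      intro h
      rw [mem_sphere_zero_iff_norm] at hc
      rw [h] at hc; simp at hc
    simp only [Om, Set.mem_setOf_eq, ne_eq, Prod.mk.injEq, not_and]
    intro _ h0
    exact hc0 h0.symm
  obtain ⟨C₁, hC₁⟩ := hK₁c.exists_bound_of_continuousOn (hφ.mono hK₁Ω)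
  obtain ⟨C₂, hC₂⟩ := hK₂c.exists_bound_of_continuousOn (hφ.mono hK₂Ω)
  set C := max (max C₁ C₂) 0 with hCdef
  have hC₁C : C₁ ≤ C := le_trans (le_max_left _ _) (le_max_left _ _)
  have hC₂C : C₂ ≤ C := le_trans (le_max_right _ _) (le_max_left _ _)
  refine ⟨C, le_max_right _ _, ?_⟩
  intro z hz η
  set T := ∑ j', τ j' with hT
  set ρ : ℝ := ⨆ j, |η j| ^ (τ j)⁻¹ with hρdef
  have hbdd : BddAbove (Set.range fun j => |η j| ^ (τ j)⁻¹) :=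
    Set.Finite.bddAbove (Set.finite_range _)
  have hρ_le : ∀ j, |η j| ^ (τ j)⁻¹ ≤ ρ := fun j => le_ciSup hbdd j
  have hηρ : ∀ j, |η j| ≤ ρ ^ τ j := by
    intro j
    have h0 : 0 ≤ |η j| ^ (τ j)⁻¹ := Real.rpow_nonneg (abs_nonneg _) _
    calc |η j| = (|η j| ^ (τ j)⁻¹) ^ τ j := (Real.rpow_inv_rpow (abs_nonneg _) (hτ0 j).ne').symm
      _ ≤ ρ ^ τ j := Real.rpow_le_rpow h0 (hρ_le j) (hτ0 j).le
  have hρ0 : 0 ≤ ρ := by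
    rcases isEmpty_or_nonempty (Fin p) with hp | hp
    · rw [hρdef, Real.iSup_of_isEmpty]
    · exact le_trans (Real.rpow_nonneg (abs_nonneg _) _) (hρ_le (Classical.arbitrary _))
  rcases le_or_gt ρ 1 with hρ1 | hρ1
  · -- small η case
    have hη1 : ∀ j, |η j| ≤ 1 := by
      intro j
      calc |η j| ≤ ρ ^ τ j := hηρ j
        _ ≤ 1 := Real.rpow_le_one hρ0 hρ1 (hτ0 j).le
    have hprod : (∏ j, max 1 |η j| ^ (β / T)) = 1 := by
      refine Finset.prod_eq_one fun j _ => ?_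
      rw [max_eq_left (hη1 j), Real.one_rpow]
    have hmem : (z.1, z.2, η) ∈ K₂ := by
      refine ⟨⟨z, η⟩, ⟨hz, ?_⟩, rfl⟩
      rw [mem_closedBall_zero_iff]
      exact pi_norm_le_iff_of_nonneg zero_le_one |>.2 fun j => by
        rw [Real.norm_eq_abs]; exact hη1 j
    rw [hprod, mul_one]
    calc |φ (z.1, z.2, η)| = ‖φ (z.1, z.2, η)‖ := rfl
      _ ≤ C₂ := hC₂ _ hmem
      _ ≤ C := hC₂C
  · -- large η case
    have hpne : Nonempty (Fin p) := by
      rcases isEmpty_or_nonempty (Fin p) with hp | hp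
      · exfalso; rw [hρdef, Real.iSup_of_isEmpty] at hρ1; linarith
      · exact hp
    have hρpos : 0 < ρ := lt_trans one_pos hρ1
    obtain ⟨j₀, hj₀⟩ := Finite.exists_max fun j => |η j| ^ (τ j)⁻¹
    have hρeq : ρ = |η j₀| ^ (τ j₀)⁻¹ := le_antisymm (ciSup_le hj₀) (hρ_le j₀)
    have hηj₀ : |η j₀| = ρ ^ τ j₀ := by
      rw [hρeq, Real.rpow_inv_rpow (abs_nonneg _) (hτ0 j₀).ne']
    have hTpos : (0:ℝ) < T := Finset.sum_pos (fun j _ => hτ0 j) Finset.univ_nonempty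
    -- the rescaled point
    set w₀ : (Fin n → ℝ) × (Fin n → ℝ) × (Fin p → ℝ) :=
      (fun i => ρ⁻¹ ^ σ i * z.1 i, fun i => ρ⁻¹ ^ σ i * z.2 i, fun j => ρ⁻¹ ^ τ j * η j)
      with hw₀def
    have hρinv0 : 0 ≤ ρ⁻¹ := inv_nonneg.2 hρ0
    have hρinv1 : ρ⁻¹ ≤ 1 := by
      rw [inv_le_one_iff₀]; right; exact hρ1.le
    -- norm of third component is 1
    have hcoord : ∀ j, |ρ⁻¹ ^ τ j * η j| ≤ 1 := by
      intro j
      rw [abs_mul, abs_of_nonneg (Real.rpow_nonneg hρinv0 _), Real.inv_rpow hρ0]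
      rw [← Real.rpow_inv_rpow (x := |η j|) (abs_nonneg _) (hτ0 j).ne']
      calc (ρ ^ τ j)⁻¹ * (|η j| ^ (τ j)⁻¹) ^ τ j
          ≤ (ρ ^ τ j)⁻¹ * ρ ^ τ j :=
            mul_le_mul_of_nonneg_left
              (Real.rpow_le_rpow (Real.rpow_nonneg (abs_nonneg _) _) (hρ_le j) (hτ0 j).le)
              (inv_nonneg.2 (Real.rpow_nonneg hρ0 _))
        _ = 1 := inv_mul_cancel₀ (Real.rpow_pos_of_pos hρpos _).ne'
    have hcoordj₀ : |ρ⁻¹ ^ τ j₀ * η j₀| = 1 := by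
      rw [abs_mul, abs_of_nonneg (Real.rpow_nonneg hρinv0 _), Real.inv_rpow hρ0, hηj₀]
      exact inv_mul_cancel₀ (Real.rpow_pos_of_pos hρpos _).ne'
    have hnorm3 : ‖w₀.2.2‖ = 1 := by
      refine le_antisymm ?_ ?_
      · exact (pi_norm_le_iff_of_nonneg zero_le_one).2 fun j => by
          rw [Real.norm_eq_abs]; exact hcoord j
      · calc (1:ℝ) = |ρ⁻¹ ^ τ j₀ * η j₀| := hcoordj₀.symm
          _ = ‖w₀.2.2 j₀‖ := rfl
          _ ≤ ‖w₀.2.2‖ := norm_le_pi_norm _ j₀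
    have hw₀Ω : w₀ ∈ Om n p := by
      simp only [Om, Set.mem_setOf_eq, ne_eq, Prod.mk.injEq, not_and]
      intro _ h0
      have h22 : w₀.2.2 = 0 := h0.symm
      rw [h22] at hnorm3
      simp at hnorm3
    -- z norms
    have hzball : z ∈ closedBall (0 : (Fin n → ℝ) × (Fin n → ℝ)) M := hM hz
    have hzn : ‖z‖ ≤ M := by rwa [mem_closedBall_zero_iff] at hzball
    have hM0 : 0 ≤ M := le_trans (norm_nonneg _) hzn
    have hz1 : ∀ i, |z.1 i| ≤ M := fun i =>
      le_trans (le_trans (norm_le_pi_norm z.1 i) (norm_fst_le z)) hzn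
    have hz2 : ∀ i, |z.2 i| ≤ M := fun i =>
      le_trans (le_trans (norm_le_pi_norm z.2 i) (norm_snd_le z)) hzn
    have hscaled : ∀ (u : Fin n → ℝ), (∀ i, |u i| ≤ M) →
        (fun i => ρ⁻¹ ^ σ i * u i) ∈ closedBall (0 : Fin n → ℝ) M := by
      intro u hu
      rw [mem_closedBall_zero_iff]
      refine (pi_norm_le_iff_of_nonneg hM0).2 fun i => ?_
      rw [Real.norm_eq_abs, abs_mul, abs_of_nonneg (Real.rpow_nonneg hρinv0 _)]
      calc ρ⁻¹ ^ σ i * |u i| ≤ 1 * M := by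
            gcongr
            · exact Real.rpow_le_one hρinv0 hρinv1 (hσ i)
            · exact hu i
        _ = M := one_mul M
    have hw₀K₁ : w₀ ∈ K₁ := by
      refine ⟨hscaled z.1 hz1, hscaled z.2 hz2, ?_⟩
      rw [mem_sphere_zero_iff_norm]
      exact hnorm3
    -- homogeneity: φ (z.1,z.2,η) = ρ^β * φ w₀
    have hdil : (fun i => ρ ^ σ i * w₀.1 i, fun i => ρ ^ σ i * w₀.2.1 i,
        fun j => ρ ^ τ j * w₀.2.2 j) = (z.1, z.2, η) := by
      have key : ∀ (s t : ℝ), ρ ^ s * (ρ⁻¹ ^ s * t) = t := by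
        intro s t
        rw [Real.inv_rpow hρ0, ← mul_assoc,
          mul_inv_cancel₀ (Real.rpow_pos_of_pos hρpos _).ne', one_mul]
      refine Prod.ext (funext fun i => key _ _) (Prod.ext (funext fun i => key _ _)
        (funext fun j => key _ _))
    have hhomval : φ (z.1, z.2, η) = ρ ^ β * φ w₀ := by
      have := hhomφ w₀ hw₀Ω ρ hρpos
      rw [hdil] at this
      exact this
    have hφw₀ : |φ w₀| ≤ C := le_trans (hC₁ w₀ hw₀K₁) hC₁C
    -- ρ^β ≤ ∏ max 1 |η j| ^ (β/T)
    have hfactor : ∀ j, ρ ^ (τ j * (β / T)) ≤ max 1 |η j| ^ (β / T) := by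
      intro j
      rw [Real.rpow_mul hρ0]
      refine Real.rpow_le_rpow_of_nonpos ?_ ?_ (div_nonpos_of_nonpos_of_nonneg hβ hTpos.le)
      · exact lt_of_lt_of_le one_pos (le_max_left _ _)
      · exact max_le (Real.one_le_rpow hρ1.le (hτ0 j).le) (hηρ j)
    have hρβ : ρ ^ β ≤ ∏ j, max 1 |η j| ^ (β / T) := by
      have hsum : β = ∑ j : Fin p, τ j * (β / T) := by
        rw [← Finset.sum_mul, ← hT]
        field_simp
      calc ρ ^ β = ρ ^ (∑ j : Fin p, τ j * (β / T)) := by rw [← hsum]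
        _ = ∏ j : Fin p, ρ ^ (τ j * (β / T)) :=
            Real.rpow_sum_of_pos hρpos (fun j => τ j * (β / T)) Finset.univ
        _ ≤ _ := Finset.prod_le_prod (fun j _ => Real.rpow_nonneg hρ0 _) fun j _ => hfactor j
    calc |φ (z.1, z.2, η)| = ρ ^ β * |φ w₀| := by
          rw [hhomval, abs_mul, abs_of_nonneg (Real.rpow_nonneg hρ0 _)]
      _ ≤ (∏ j, max 1 |η j| ^ (β / T)) * C := by
          apply mul_le_mul hρβ hφw₀ (abs_nonneg _)
          exact Finset.prod_nonneg fun j _ => Real.rpow_nonneg (le_trans zero_le_one (le_max_left _ _)) _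
      _ = C * ∏ j, max 1 |η j| ^ (β / T) := mul_comm _ _

private lemma mem_Om_iff {n p : ℕ} (w : (Fin n → ℝ) × (Fin n → ℝ) × (Fin p → ℝ)) :
    w ∈ Om n p ↔ w.1 ≠ w.2.1 ∨ w.2.2 ≠ 0 := by
  simp only [Om, Set.mem_setOf_eq, ne_eq, Prod.mk.injEq, not_and]
  constructor
  · intro h
    by_cases h1 : w.1 = w.2.1
    · exact Or.inr fun h2 => h h1 (h2 ▸ rfl)
    · exact Or.inl h1
  · rintro (h1 | h2)
    · exact fun h _ => h1 h
    · exact fun _ h => h2 h.symm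
/-- Step (I)-(ii) in the proof of Lemma 4.3: differentiation under the integral sign.
If `g` is C¹ on `Ω = {(x,y,η) : (x,0) ≠ (y,η)}` and `F_λ`-homogeneous of degree
`α < q − Q`, then for `x ≠ y` and every coordinate direction `v` of the
`(x,y)`-variables, the directional derivative of `h(x,y) = ∫_{ℝ^p} g(x,y,η) dη`
exists and is obtained by differentiating under the integral sign. -/
theorem stmt7 (n p : ℕ) (σ : Fin n → ℝ) (τ : Fin p → ℝ)
    (hσ : ∀ i, 1 ≤ σ i) (hτ : ∀ j, 1 ≤ τ j)
    (α : ℝ) (hα : α < (∑ i, σ i) - ((∑ i, σ i) + ∑ j, τ j))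
    (g : (Fin n → ℝ) × (Fin n → ℝ) × (Fin p → ℝ) → ℝ)
    (hg : ContDiffOn ℝ 1 g
      {w : (Fin n → ℝ) × (Fin n → ℝ) × (Fin p → ℝ) |
        ((w.1, (0 : Fin p → ℝ)) : (Fin n → ℝ) × (Fin p → ℝ)) ≠ (w.2.1, w.2.2)})
    (hhom : ∀ w ∈
      {w : (Fin n → ℝ) × (Fin n → ℝ) × (Fin p → ℝ) |
        ((w.1, (0 : Fin p → ℝ)) : (Fin n → ℝ) × (Fin p → ℝ)) ≠ (w.2.1, w.2.2)},
      ∀ l : ℝ, 0 < l →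
        g (fun i => l ^ (σ i) * w.1 i,
            fun i => l ^ (σ i) * w.2.1 i,
            fun j => l ^ (τ j) * w.2.2 j) = l ^ α * g w)
    (x y : Fin n → ℝ) (hxy : x ≠ y)
    (v : (Fin n → ℝ) × (Fin n → ℝ))
    (hv : (∃ i, v = (Pi.single i 1, 0)) ∨ (∃ i, v = (0, Pi.single i 1))) :
    Integrable (fun η : Fin p → ℝ =>
        fderiv ℝ g (x, y, η) (v.1, v.2, (0 : Fin p → ℝ))) ∧
    HasDerivAt (fun t : ℝ => ∫ η : Fin p → ℝ, g (x + t • v.1, y + t • v.2, η))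
      (∫ η : Fin p → ℝ, fderiv ℝ g (x, y, η) (v.1, v.2, (0 : Fin p → ℝ))) 0 := by
  classical
  have hΩo : IsOpen (Om n p) := isOpen_Om n p
  have hg' : ContDiffOn ℝ 1 g (Om n p) := hg
  have hhom' : ∀ w ∈ Om n p, ∀ l : ℝ, 0 < l →
      g (fun i => l ^ (σ i) * w.1 i, fun i => l ^ (σ i) * w.2.1 i,
          fun j => l ^ (τ j) * w.2.2 j) = l ^ α * g w := hhom
  have hgc : ContinuousOn g (Om n p) := hg'.continuousOn
  have hdiff : DifferentiableOn ℝ g (Om n p) := hg'.differentiableOn one_ne_zero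
  have dAt : ∀ u ∈ Om n p, DifferentiableAt ℝ g u := fun u hu =>
    (hdiff u hu).differentiableAt (hΩo.mem_nhds hu)
  have hfc : ContinuousOn (fderiv ℝ g) (Om n p) :=
    hg'.continuousOn_fderiv_of_isOpen hΩo le_rfl
  set v' : (Fin n → ℝ) × (Fin n → ℝ) × (Fin p → ℝ) := (v.1, v.2, (0 : Fin p → ℝ))
    with hv'def
  set φ : ((Fin n → ℝ) × (Fin n → ℝ) × (Fin p → ℝ)) → ℝ := fun w => fderiv ℝ g w v'
    with hφdef
  have hφc : ContinuousOn φ (Om n p) := hfc.clm_apply continuousOn_const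
  -- the direction vector scales with a single exponent
  obtain ⟨s, hs1, hsFl⟩ : ∃ s : ℝ, 1 ≤ s ∧ ∀ l : ℝ, 0 < l →
      Fl n p σ τ l v' = l ^ s • v' := by
    rcases hv with ⟨i, hvi⟩ | ⟨i, hvi⟩
    · refine ⟨σ i, hσ i, fun l hl => ?_⟩
      rw [Fl_apply, hv'def, hvi]
      refine Prod.ext ?_ (Prod.ext ?_ ?_) <;> funext k
      · by_cases h : k = i
        · subst h; simp
        · simp [Pi.single_apply, h]
      · simp
      · simp
    · refine ⟨σ i, hσ i, fun l hl => ?_⟩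
      rw [Fl_apply, hv'def, hvi]
      refine Prod.ext ?_ (Prod.ext ?_ ?_) <;> funext k
      · simp
      · by_cases h : k = i
        · subst h; simp
        · simp [Pi.single_apply, h]
      · simp
  -- the dilations preserve Ω
  have hOmmap : ∀ l : ℝ, 0 < l → ∀ w ∈ Om n p, Fl n p σ τ l w ∈ Om n p := by
    intro l hl w hw
    rw [mem_Om_iff] at hw
    rw [Fl_apply, mem_Om_iff]
    rcases hw with h1 | h2
    · left
      obtain ⟨k, hk⟩ := Function.ne_iff.1 h1
      refine Function.ne_iff.2 ⟨k, fun h => hk ?_⟩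
      exact mul_left_cancel₀ (Real.rpow_pos_of_pos hl _).ne' h
    · right
      obtain ⟨k, hk⟩ := Function.ne_iff.1 h2
      refine Function.ne_iff.2 ⟨k, fun h => hk ?_⟩
      simp only [Pi.zero_apply] at h ⊢
      rcases mul_eq_zero.1 h with h' | h'
      · exact absurd h' (Real.rpow_pos_of_pos hl _).ne'
      · exact h'
  -- homogeneity of the directional derivative
  have hφhom : ∀ w ∈ Om n p, ∀ l : ℝ, 0 < l →
      φ (fun i => l ^ σ i * w.1 i, fun i => l ^ σ i * w.2.1 i, fun j => l ^ τ j * w.2.2 j)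
        = l ^ (α - s) * φ w := by
    intro w hw l hl
    have hLw : Fl n p σ τ l w ∈ Om n p := hOmmap l hl w hw
    have hev : (fun u => g (Fl n p σ τ l u)) =ᶠ[nhds w] fun u => l ^ α * g u := by
      filter_upwards [hΩo.mem_nhds hw] with u hu
      rw [Fl_apply]
      exact hhom' u hu l hl
    have h1 : fderiv ℝ (fun u => g (Fl n p σ τ l u)) w
        = (fderiv ℝ g (Fl n p σ τ l w)).comp (Fl n p σ τ l : _) := by
      rw [show (fun u => g (Fl n p σ τ l u)) = g ∘ (Fl n p σ τ l) from rfl,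
        fderiv_comp w (dAt _ hLw) (Fl n p σ τ l).differentiableAt,
        (Fl n p σ τ l).fderiv]
    have h2 : fderiv ℝ (fun u => l ^ α * g u) w = l ^ α • fderiv ℝ g w :=
      fderiv_const_mul (dAt w hw) _
    have h3 := Filter.EventuallyEq.fderiv_eq (𝕜 := ℝ) hev
    rw [h1, h2] at h3
    have h4 := congrArg (fun (L : ((Fin n → ℝ) × (Fin n → ℝ) × (Fin p → ℝ)) →L[ℝ] ℝ) => L v') h3
    simp only [ContinuousLinearMap.comp_apply, ContinuousLinearMap.coe_smul',
      Pi.smul_apply, smul_eq_mul] at h4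
    rw [hsFl l hl, _root_.map_smul, smul_eq_mul] at h4
    have hls : (0:ℝ) < l ^ s := Real.rpow_pos_of_pos hl s
    rw [← Fl_apply n p σ τ l w]
    show fderiv ℝ g (Fl n p σ τ l w) v' = l ^ (α - s) * fderiv ℝ g w v'
    rw [Real.rpow_sub hl]
    field_simp
    linear_combination h4
  -- exponent arithmetic
  have hαT : α < -(∑ j, τ j) := by linarith
  have hT0 : (0:ℝ) ≤ ∑ j, τ j := Finset.sum_nonneg fun j _ => le_trans zero_le_one (hτ j)
  have hα0 : α ≤ 0 := by linarith
  have hβ0 : α - s ≤ 0 := by linarith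
  have hT1 : 0 < p → (1:ℝ) ≤ ∑ j, τ j := by
    intro hp
    calc (1:ℝ) ≤ τ ⟨0, hp⟩ := hτ _
      _ ≤ ∑ j, τ j := Finset.single_le_sum (fun j _ => le_trans zero_le_one (hτ j))
          (Finset.mem_univ _)
  have hc₀ : 0 < p → α / (∑ j, τ j) < -1 := by
    intro hp
    rw [div_lt_iff₀ (by linarith [hT1 hp])]
    linarith [hT1 hp]
  have hc₁ : 0 < p → (α - s) / (∑ j, τ j) < -1 := by
    intro hp
    rw [div_lt_iff₀ (by linarith [hT1 hp])]
    linarith [hT1 hp]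
  have hB₀int := integrable_B (p := p) (α / (∑ j, τ j)) hc₀
  have hB₁int := integrable_B (p := p) ((α - s) / (∑ j, τ j)) hc₁
  -- the compact segment
  set ε := ‖x - y‖ / (‖v.1‖ + ‖v.2‖ + 1) with hεdef
  have hd0 : 0 < ‖x - y‖ := by rw [norm_pos_iff]; exact sub_ne_zero.2 hxy
  have hden : 0 < ‖v.1‖ + ‖v.2‖ + 1 := by positivity
  have hε : 0 < ε := div_pos hd0 hden
  have hne : ∀ t : ℝ, |t| ≤ ε → x + t • v.1 ≠ y + t • v.2 := by
    intro t ht heq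
    have h' : x - y = t • v.2 - t • v.1 := by
      rw [sub_eq_sub_iff_add_eq_add, heq]
      abel
    have hnorm : ‖x - y‖ ≤ |t| * (‖v.1‖ + ‖v.2‖) := by
      rw [h']
      calc ‖t • v.2 - t • v.1‖ ≤ ‖t • v.2‖ + ‖t • v.1‖ := norm_sub_le _ _
        _ = |t| * ‖v.2‖ + |t| * ‖v.1‖ := by
            rw [norm_smul, norm_smul, Real.norm_eq_abs]
        _ = |t| * (‖v.1‖ + ‖v.2‖) := by ring
    have h2 : |t| * (‖v.1‖ + ‖v.2‖) ≤ ε * (‖v.1‖ + ‖v.2‖) :=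
      mul_le_mul_of_nonneg_right ht (by positivity)
    have h3 : ε * (‖v.1‖ + ‖v.2‖) + ε = ‖x - y‖ := by
      rw [hεdef]; field_simp
    linarith
  set K := (fun t : ℝ => (x + t • v.1, y + t • v.2)) '' closedBall (0:ℝ) ε with hKdef
  have hKc : IsCompact K := (isCompact_closedBall _ _).image (by fun_prop)
  have hKd : ∀ z ∈ K, z.1 ≠ z.2 := by
    rintro z ⟨t, ht, rfl⟩
    rw [mem_closedBall, Real.dist_eq, sub_zero] at ht
    exact hne t ht
  have hKmem : ∀ t : ℝ, |t| ≤ ε → ((x + t • v.1, y + t • v.2) :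
      (Fin n → ℝ) × (Fin n → ℝ)) ∈ K :=
    fun t ht => ⟨t, by rwa [mem_closedBall, Real.dist_eq, sub_zero], rfl⟩
  obtain ⟨C₀, hC₀0, hC₀⟩ := key_bound σ τ (fun i => le_trans zero_le_one (hσ i)) hτ α hα0
    g hgc hhom' K hKc hKd
  obtain ⟨C₁, hC₁0, hC₁⟩ := key_bound σ τ (fun i => le_trans zero_le_one (hσ i)) hτ (α - s)
    hβ0 φ hφc hφhom K hKc hKd
  have hmemΩ : ∀ t : ℝ, |t| ≤ ε → ∀ η : Fin p → ℝ,
      ((x + t • v.1, y + t • v.2, η) :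
        (Fin n → ℝ) × (Fin n → ℝ) × (Fin p → ℝ)) ∈ Om n p :=
    fun t ht η => (mem_Om_iff _).2 (Or.inl (hne t ht))
  have h0ε : |(0:ℝ)| ≤ ε := by simpa using hε.le
  -- hypotheses of the dominated differentiation theorem
  have hmeas : ∀ᶠ t in nhds (0:ℝ), AEStronglyMeasurable
      (fun η : Fin p → ℝ => g (x + t • v.1, y + t • v.2, η)) volume := by
    filter_upwards [Metric.ball_mem_nhds (0:ℝ) hε] with t ht
    rw [mem_ball, Real.dist_eq, sub_zero] at ht
    exact (hgc.comp_continuous (by fun_prop) fun η => hmemΩ t ht.le η).aestronglyMeasurable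
  have hint : Integrable
      (fun η : Fin p → ℝ => g (x + (0:ℝ) • v.1, y + (0:ℝ) • v.2, η)) := by
    refine (hB₀int.const_mul C₀).mono'
      (hgc.comp_continuous (by fun_prop) fun η => hmemΩ 0 h0ε η).aestronglyMeasurable
      (ae_of_all _ fun η => ?_)
    rw [Real.norm_eq_abs]
    exact hC₀ _ (hKmem 0 h0ε) η
  have hF'meas : AEStronglyMeasurable
      (fun η : Fin p → ℝ => fderiv ℝ g (x + (0:ℝ) • v.1, y + (0:ℝ) • v.2, η) v') volume :=
    (hφc.comp_continuous (by fun_prop) fun η => hmemΩ 0 h0ε η).aestronglyMeasurable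
  have hbound : ∀ᵐ η : Fin p → ℝ, ∀ t ∈ ball (0:ℝ) ε,
      ‖fderiv ℝ g (x + t • v.1, y + t • v.2, η) v'‖ ≤
        C₁ * ∏ j, max 1 |η j| ^ ((α - s) / ∑ j', τ j') := by
    refine ae_of_all _ fun η t ht => ?_
    rw [mem_ball, Real.dist_eq, sub_zero] at ht
    rw [Real.norm_eq_abs]
    exact hC₁ _ (hKmem t ht.le) η
  have hbint : Integrable
      (fun η : Fin p → ℝ => C₁ * ∏ j, max 1 |η j| ^ ((α - s) / ∑ j', τ j')) :=
    hB₁int.const_mul C₁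
  have hdiff2 : ∀ᵐ η : Fin p → ℝ, ∀ t ∈ ball (0:ℝ) ε,
      HasDerivAt (fun t' : ℝ => g (x + t' • v.1, y + t' • v.2, η))
        (fderiv ℝ g (x + t • v.1, y + t • v.2, η) v') t := by
    refine ae_of_all _ fun η t ht => ?_
    rw [mem_ball, Real.dist_eq, sub_zero] at ht
    have hw : ((x + t • v.1, y + t • v.2, η) :
        (Fin n → ℝ) × (Fin n → ℝ) × (Fin p → ℝ)) ∈ Om n p := hmemΩ t ht.le η
    have hγ : HasDerivAt (fun t' : ℝ => ((x + t' • v.1, y + t' • v.2, η) :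
        (Fin n → ℝ) × (Fin n → ℝ) × (Fin p → ℝ))) v' t := by
      rw [hv'def]
      refine HasDerivAt.prodMk ?_ (HasDerivAt.prodMk ?_ (hasDerivAt_const t η))
      · simpa using ((hasDerivAt_id t).smul_const v.1).const_add x
      · simpa using ((hasDerivAt_id t).smul_const v.2).const_add y
    exact (dAt _ hw).hasFDerivAt.comp_hasDerivAt t hγ
  obtain ⟨hint', hder⟩ := hasDerivAt_integral_of_dominated_loc_of_deriv_le (Metric.ball_mem_nhds (0:ℝ) hε) hmeas hint
    hF'meas hbound hbint hdiff2
  constructor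
  · simpa only [zero_smul, add_zero] using hint'
  · simpa only [zero_smul, add_zero] using hder
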